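/- Let ρ be a 2×2 density matrix with ρ₀₀ > 0 and ρ₁₁ > 0, and let ω ∈ ℂ with |ω| = 1 be such that ρ₀₁ = |ρ₀₁| ω (so ω̄ = e^{−i arg ρ₀₁} when ρ₀₁ ≠ 0). Define the unit vectors ψ₁ = (√ρ₀₀, ω̄ √ρ₁₁)ᵀ and ψ₂ = (√ρ₀₀, −ω̄ √ρ₁₁)ᵀ and the weights p₁ = (1 + |ρ₀₁|/√(ρ₀₀ρ₁₁))/2, p₂ = (1 − |ρ₀₁|/√(ρ₀₀ρ₁₁))/2. Then 0 ≤ p₂ ≤ p₁ ≤ 1, p₁ + p₂ = 1, ρ = p₁ ψ₁ψ₁* + p₂ ψ₂ψ₂*, and |ψ_k(i)|² = ρ_ii for k = 1, 2 and i = 0, 1; hence this decomposition attains the maximal average coherence f(ρ₀₀, ρ₁₁) for every symmetric concave f on Ω₂. (Example 1.) -/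

import Mathlib

open Matrix BigOperators
open scoped ComplexOrder

noncomputable section

/-- A symmetric function: invariant under all coordinate permutations. -/
def SymmetricFn {n : ℕ} (f : (Fin n → ℝ) → ℝ) : Prop :=
  ∀ (σ : Equiv.Perm (Fin n)) (x : Fin n → ℝ), f (x ∘ σ) = f x

/-- A density matrix: positive semidefinite with trace one. -/
def IsDensityMatrix {n : ℕ} (ρ : Matrix (Fin n) (Fin n) ℂ) : Prop :=
  ρ.PosSemidef ∧ ρ.trace = 1

/-- The rank-one projection `ψ ψ*` associated to a vector `ψ ∈ ℂⁿ`. -/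
def outer {n : ℕ} (ψ : Fin n → ℂ) : Matrix (Fin n) (Fin n) ℂ :=
  Matrix.vecMulVec ψ (fun i => starRingEnd ℂ (ψ i))

/-- `(p, ψ)` is a pure state decomposition of `ρ`. -/
def IsDecomposition {n m : ℕ} (ρ : Matrix (Fin n) (Fin n) ℂ)
    (p : Fin m → ℝ) (ψ : Fin m → Fin n → ℂ) : Prop :=
  (∀ k, 0 ≤ p k) ∧ (∑ k, p k = 1) ∧ (∀ k, ∑ i, ‖ψ k i‖ ^ 2 = 1) ∧
    ρ = ∑ k, (p k : ℂ) • outer (ψ k)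

/-- The coherence vector `(|ψ₀|², …, |ψ_{n-1}|²)` of a vector `ψ`. -/
def cohVec {n : ℕ} (ψ : Fin n → ℂ) : Fin n → ℝ := fun i => ‖ψ i‖ ^ 2

/-- The average coherence of a pure state decomposition with respect to `f`. -/
def avgCoh {n m : ℕ} (f : (Fin n → ℝ) → ℝ) (p : Fin m → ℝ)
    (ψ : Fin m → Fin n → ℂ) : ℝ :=
  ∑ k, p k * f (cohVec (ψ k))


/-- Example 1: explicit optimal pure state decomposition of a qubit density matrix
with positive diagonal. With `ω` a unimodular number such that `ρ₀₁ = |ρ₀₁| ω`,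
the states `ψ₁ = (√ρ₀₀, ω̄ √ρ₁₁)`, `ψ₂ = (√ρ₀₀, −ω̄ √ρ₁₁)` with weights
`p₁ = (1 + |ρ₀₁|/√(ρ₀₀ρ₁₁))/2`, `p₂ = (1 − |ρ₀₁|/√(ρ₀₀ρ₁₁))/2` decompose `ρ`,
share its diagonal, and attain the maximal average coherence `f(ρ₀₀, ρ₁₁)`. -/
theorem example_one_qubit_optimal_decomposition
    (ρ : Matrix (Fin 2) (Fin 2) ℂ) (hρ : IsDensityMatrix ρ)
    (h00 : 0 < (ρ 0 0).re) (h11 : 0 < (ρ 1 1).re)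
    (ω : ℂ) (hω : ‖ω‖ = 1) (harg : ρ 0 1 = (‖ρ 0 1‖ : ℂ) * ω) :
    let ψ₁ : Fin 2 → ℂ :=
      ![(Real.sqrt ((ρ 0 0).re) : ℂ),
        starRingEnd ℂ ω * (Real.sqrt ((ρ 1 1).re) : ℂ)]
    let ψ₂ : Fin 2 → ℂ :=
      ![(Real.sqrt ((ρ 0 0).re) : ℂ),
        -(starRingEnd ℂ ω * (Real.sqrt ((ρ 1 1).re) : ℂ))]
    let p₁ : ℝ := (1 + ‖ρ 0 1‖ / Real.sqrt ((ρ 0 0).re * (ρ 1 1).re)) / 2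
    let p₂ : ℝ := (1 - ‖ρ 0 1‖ / Real.sqrt ((ρ 0 0).re * (ρ 1 1).re)) / 2
    (0 ≤ p₂ ∧ p₂ ≤ p₁ ∧ p₁ ≤ 1) ∧ p₁ + p₂ = 1 ∧
    ρ = (p₁ : ℂ) • outer ψ₁ + (p₂ : ℂ) • outer ψ₂ ∧
    (∀ i, ‖ψ₁ i‖ ^ 2 = (ρ i i).re) ∧ (∀ i, ‖ψ₂ i‖ ^ 2 = (ρ i i).re) ∧
    ∀ f : (Fin 2 → ℝ) → ℝ, SymmetricFn f → ConcaveOn ℝ (stdSimplex ℝ (Fin 2)) f →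
      p₁ * f (cohVec ψ₁) + p₂ * f (cohVec ψ₂) = f (fun i => (ρ i i).re) ∧
      IsGreatest {c : ℝ | ∃ (m : ℕ) (p : Fin m → ℝ) (ψ : Fin m → Fin 2 → ℂ),
          IsDecomposition ρ p ψ ∧ c = avgCoh f p ψ}
        (p₁ * f (cohVec ψ₁) + p₂ * f (cohVec ψ₂)) := by
  obtain ⟨hpsd, htr⟩ := hρ
  have hherm := hpsd.1
  intro ψ₁ ψ₂ p₁ p₂
  set a := (ρ 0 0).re with ha_def
  set b := (ρ 1 1).re with hb_def
  set r := ‖ρ 0 1‖ with hr_def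
  have hr0 : 0 ≤ r := norm_nonneg _
  have ha0 : ρ 0 0 = (a : ℂ) := (hherm.coe_re_apply_self 0).symm
  have hb0 : ρ 1 1 = (b : ℂ) := (hherm.coe_re_apply_self 1).symm
  have h10 : ρ 1 0 = starRingEnd ℂ (ρ 0 1) := (hherm.apply 1 0).symm
  -- trace condition
  have htrre : a + b = 1 := by
    have := congrArg Complex.re (Matrix.trace_fin_two ρ ▸ htr)
    simpa using this
  -- PSD gives r^2 ≤ a*b
  have key : r ^ 2 ≤ a * b := by
    have h := hpsd.dotProduct_mulVec_nonneg ![ρ 0 1, -(a : ℂ)]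
    have hval : star ![ρ 0 1, -(a : ℂ)] ⬝ᵥ ρ *ᵥ ![ρ 0 1, -(a : ℂ)]
        = (a : ℂ) * ((a : ℂ) * b - (r : ℂ) ^ 2) := by
      simp only [dotProduct, Matrix.mulVec, Fin.sum_univ_two,
        Pi.star_apply, Matrix.cons_val_zero, Matrix.cons_val_one, Matrix.head_cons,
        star_neg, star_trivial]
      rw [ha0, hb0, h10]
      have : starRingEnd ℂ (ρ 0 1) * ρ 0 1 = ((r : ℂ)) ^ 2 := by
        rw [Complex.conj_mul']
      simp only [Complex.star_def]
      rw [Complex.conj_ofReal, this]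
      ring
    rw [hval] at h
    have h' : (0:ℂ) ≤ ((a * (a * b - r ^ 2) : ℝ) : ℂ) := by push_cast; convert h using 1
    have h'' : 0 ≤ a * (a * b - r ^ 2) := by
      rwa [Complex.zero_le_real] at h'
    nlinarith
  have hs : 0 < Real.sqrt (a * b) := Real.sqrt_pos.mpr (by positivity)
  have hrs : r ≤ Real.sqrt (a * b) := by
    calc r = Real.sqrt (r ^ 2) := (Real.sqrt_sq hr0).symm
    _ ≤ Real.sqrt (a * b) := Real.sqrt_le_sqrt key
  have hq1 : r / Real.sqrt (a * b) ≤ 1 := (div_le_one hs).mpr hrs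
  have hq0 : 0 ≤ r / Real.sqrt (a * b) := div_nonneg hr0 hs.le
  have hp1def : p₁ = (1 + r / Real.sqrt (a * b)) / 2 := rfl
  have hp2def : p₂ = (1 - r / Real.sqrt (a * b)) / 2 := rfl
  have hp12 : p₁ + p₂ = 1 := by rw [hp1def, hp2def]; ring
  have hsa : Real.sqrt a * Real.sqrt a = a := Real.mul_self_sqrt h00.le
  have hsb : Real.sqrt b * Real.sqrt b = b := Real.mul_self_sqrt h11.le
  have hsab : Real.sqrt (a * b) = Real.sqrt a * Real.sqrt b := Real.sqrt_mul h00.le b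
  have hq_mul : (r / Real.sqrt (a * b)) * (Real.sqrt a * Real.sqrt b) = r := by
    rw [← hsab]; field_simp
  have hωω : ω * starRingEnd ℂ ω = 1 := by
    rw [Complex.mul_conj]
    norm_cast
    simp [Complex.normSq_eq_norm_sq, hω]
  have hsac : ((Real.sqrt a : ℂ)) * (Real.sqrt a : ℂ) = (a : ℂ) := by exact_mod_cast hsa
  have hsbc : ((Real.sqrt b : ℂ)) * (Real.sqrt b : ℂ) = (b : ℂ) := by exact_mod_cast hsb
  have hpc : (p₁ : ℂ) + (p₂ : ℂ) = 1 := by exact_mod_cast hp12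
  have hdiff : p₁ - p₂ = r / Real.sqrt (a * b) := by rw [hp1def, hp2def]; ring
  have hkeyr : (p₁ - p₂) * (Real.sqrt a * Real.sqrt b) = r := by rw [hdiff]; exact hq_mul
  have hc : ((p₁ : ℂ) - p₂) * ((Real.sqrt a : ℂ) * (Real.sqrt b : ℂ)) = (r : ℂ) := by
    exact_mod_cast hkeyr
  have hn0 : ‖((Real.sqrt a : ℝ) : ℂ)‖ ^ 2 = a := by
    rw [Complex.norm_real, Real.norm_eq_abs, abs_of_nonneg (Real.sqrt_nonneg a), Real.sq_sqrt h00.le]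
  have hn1 : ‖starRingEnd ℂ ω * ((Real.sqrt b : ℝ) : ℂ)‖ ^ 2 = b := by
    rw [norm_mul, RCLike.norm_conj, hω, one_mul, Complex.norm_real, Real.norm_eq_abs,
      abs_of_nonneg (Real.sqrt_nonneg b), Real.sq_sqrt h11.le]
  have hψ1 : ∀ i, ‖ψ₁ i‖ ^ 2 = (ρ i i).re := by
    intro i
    fin_cases i
    · exact hn0
    · exact hn1
  have hψ2 : ∀ i, ‖ψ₂ i‖ ^ 2 = (ρ i i).re := by
    intro i
    fin_cases i
    · exact hn0
    · show ‖-(starRingEnd ℂ ω * ((Real.sqrt b : ℝ) : ℂ))‖ ^ 2 = b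
      rw [norm_neg]; exact hn1
  have hmat : ρ = (p₁ : ℂ) • outer ψ₁ + (p₂ : ℂ) • outer ψ₂ := by
    ext i j
    fin_cases i <;> fin_cases j <;>
      simp only [ψ₁, ψ₂, Matrix.add_apply, Matrix.smul_apply, outer, Matrix.vecMulVec_apply,
        smul_eq_mul, Matrix.cons_val_zero, Matrix.cons_val_one, Matrix.head_cons,
        _root_.map_mul, map_neg, Complex.conj_ofReal, Complex.conj_conj, Fin.isValue,
        Fin.zero_eta, Fin.mk_one]
    · rw [ha0]; simp only [Complex.ofReal_re]; linear_combination (-((p₁:ℂ) + p₂)) * hsac + (-(a:ℂ)) * hpc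
    · rw [harg]; linear_combination (-ω) * hc
    · rw [h10, harg, _root_.map_mul, Complex.conj_ofReal]
      linear_combination (-(starRingEnd ℂ ω)) * hc
    · rw [hb0]; simp only [Complex.ofReal_re]
      linear_combination (-((p₁:ℂ) + p₂) * (Real.sqrt b : ℂ) * (Real.sqrt b : ℂ)) * hωω
        + (-((p₁:ℂ) + p₂)) * hsbc + (-(b:ℂ)) * hpc
  have hv1 : cohVec ψ₁ = fun i => (ρ i i).re := funext hψ1
  have hv2 : cohVec ψ₂ = fun i => (ρ i i).re := funext hψ2
  refine ⟨⟨by rw [hp2def]; linarith, by rw [hp1def, hp2def]; linarith,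
    by rw [hp1def]; linarith⟩, hp12, hmat, hψ1, hψ2, ?_⟩
  intro f hsym hconc
  have heq : p₁ * f (cohVec ψ₁) + p₂ * f (cohVec ψ₂) = f (fun i => (ρ i i).re) := by
    rw [hv1, hv2, ← add_mul, hp12, one_mul]
  refine ⟨heq, ?_, ?_⟩
  · -- membership
    refine ⟨2, ![p₁, p₂], ![ψ₁, ψ₂], ⟨?_, ?_, ?_, ?_⟩, ?_⟩
    · intro k
      fin_cases k
      · show (0:ℝ) ≤ p₁
        rw [hp1def]; linarith
      · show (0:ℝ) ≤ p₂
        rw [hp2def]; linarith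
    · rw [Fin.sum_univ_two]; simpa using hp12
    · intro k
      fin_cases k
      · show ∑ i, ‖ψ₁ i‖ ^ 2 = 1
        rw [Fin.sum_univ_two, hψ1 0, hψ1 1]; exact htrre
      · show ∑ i, ‖ψ₂ i‖ ^ 2 = 1
        rw [Fin.sum_univ_two, hψ2 0, hψ2 1]; exact htrre
    · rw [Fin.sum_univ_two]; simpa using hmat
    · rw [avgCoh, Fin.sum_univ_two]; simp
  · -- upper bound
    rintro c ⟨m, p, ψ, ⟨hp0, hp1s, hnorm, hsum⟩, rfl⟩
    rw [heq]
    have hmem : ∀ k ∈ Finset.univ, cohVec (ψ k) ∈ stdSimplex ℝ (Fin 2) :=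
      fun k _ => ⟨fun i => sq_nonneg _, hnorm k⟩
    have hdiag : (∑ k, p k • cohVec (ψ k)) = fun i => (ρ i i).re := by
      funext i
      have h1 : ρ i i = ((∑ k, p k * ‖ψ k i‖ ^ 2 : ℝ) : ℂ) := by
        rw [hsum]
        push_cast
        rw [Matrix.sum_apply]
        apply Finset.sum_congr rfl
        intro k _
        simp only [Matrix.smul_apply, outer, Matrix.vecMulVec_apply, smul_eq_mul]
        rw [Complex.mul_conj]
        norm_cast
        simp [Complex.normSq_eq_norm_sq]
      have h2 := congrArg Complex.re h1
      simp only [Complex.ofReal_re] at h2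
      rw [Finset.sum_apply]
      simp only [Pi.smul_apply, smul_eq_mul]
      simp only [cohVec]
      exact h2.symm
    calc avgCoh f p ψ = ∑ k, p k • f (cohVec (ψ k)) := by
          simp [avgCoh, smul_eq_mul]
    _ ≤ f (∑ k, p k • cohVec (ψ k)) :=
          hconc.le_map_sum (fun k _ => hp0 k) hp1s hmem
    _ = _ := by rw [hdiag]
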